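/- Uniqueness of zero-average solutions: if ψ̃ : (0,π) → ℂ satisfies −sin θ ∂_θψ̃ + d [ (1/sin θ) ∂_θ(sin θ ∂_θψ̃) − ψ̃/sin²θ ] + iα sin θ ψ̃ = 0 on (0,π) with ψ̃ in the natural weighted H¹ space (with weight e^{(cos θ)/d} sin θ and the singular weight 1/sin²θ for the zeroth-order term), then ψ̃ = 0; consequently the equation with right-hand side sin θ has at most one such solution. -/

import Mathlib

open MeasureTheory Real Set Filter

set_option maxHeartbeats 800000

-- aux 1: non-integrability of 1/x on (0,t)
lemma not_int_inv {t : ℝ} (ht : 0 < t) : ¬ IntegrableOn (fun x : ℝ => x⁻¹) (Set.Ioo 0 t) := by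
  intro h
  have h2 : IntegrableOn (fun x : ℝ => x ^ (-1 : ℝ)) (Set.Ioo 0 t) := by
    refine h.congr_fun (fun x hx => ?_) measurableSet_Ioo
    rw [Real.rpow_neg_one]
  rw [intervalIntegral.integrableOn_Ioo_rpow_iff ht] at h2
  linarith

-- aux 2: reflection
lemma not_int_inv' {b r : ℝ} (hbr : b < r) :
    ¬ IntegrableOn (fun x : ℝ => (r - x)⁻¹) (Set.Ioo b r) := by
  intro h
  have hmp : MeasurePreserving (fun x : ℝ => r - x) volume volume :=
    Measure.measurePreserving_sub_left (volume : Measure ℝ) r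
  have hemb : MeasurableEmbedding (fun x : ℝ => r - x) :=
    (Homeomorph.subLeft r).measurableEmbedding
  have h2 : IntegrableOn ((fun x : ℝ => x⁻¹) ∘ (fun x : ℝ => r - x))
      ((fun x : ℝ => r - x) ⁻¹' (Set.Ioo 0 (r - b))) volume := by
    have hpre : (fun x : ℝ => r - x) ⁻¹' (Set.Ioo 0 (r - b)) = Set.Ioo b r := by
      ext x
      simp only [Set.mem_preimage, Set.mem_Ioo]
      constructor <;> rintro ⟨h1, h2⟩ <;> constructor <;> linarith
    rw [hpre]
    exact h.congr_fun (fun x _ => rfl) measurableSet_Ioo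
  exact not_int_inv (show (0:ℝ) < r - b by linarith)
    ((hmp.integrableOn_comp_preimage hemb).mp h2)

lemma no_local_max {u v : ℝ → ℝ} {a b c K : ℝ} (hc : c ∈ Set.Ioo a b)
    (hu : ∀ t ∈ Set.Ioo a b, HasDerivAt u (v t) t) (hvc : v c = 0)
    (hv : HasDerivAt v K c) (hK : 0 < K) : ¬ IsLocalMax u c := by
  intro hmax
  -- slope of v tends to K > 0
  have hslope : Filter.Tendsto (slope v c) (nhdsWithin c {c}ᶜ) (nhds K) :=
    (hasDerivAt_iff_tendsto_slope).mp hv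
  have hpos : ∀ᶠ t in nhdsWithin c (Set.Ioi c), 0 < v t := by
    have h1 : ∀ᶠ t in nhdsWithin c (Set.Ioi c), 0 < slope v c t := by
      have := hslope.mono_left (nhdsWithin_mono c (fun x hx => ne_of_gt hx : Set.Ioi c ⊆ {c}ᶜ))
      exact this.eventually (eventually_gt_nhds hK)
    filter_upwards [h1, self_mem_nhdsWithin] with t ht hmem
    rw [slope_def_field, hvc, sub_zero] at ht
    have htc : 0 < t - c := sub_pos.2 hmem
    rcases div_pos_iff.mp ht with ⟨h1, _⟩ | ⟨_, h2⟩
    · exact h1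
    · linarith
  -- also eventually in Ioo a b
  have hmemIoo : ∀ᶠ t in nhdsWithin c (Set.Ioi c), t ∈ Set.Ioo a b :=
    eventually_nhdsWithin_of_eventually_nhds (isOpen_Ioo.eventually_mem hc)
  obtain ⟨ε, hε, hsub⟩ := (nhdsGT_basis c).eventually_iff.mp (hpos.and hmemIoo)
  -- pick m with c < m < ε
  set m := (c + ε)/2 with hm
  have hcm : c < m := by simp [hm]; linarith
  have hmε : m < ε := by simp [hm]; linarith
  have hIccsub : Set.Icc c m ⊆ Set.Ioo a b := by
    intro x hx
    rcases eq_or_lt_of_le hx.1 with rfl | hlt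
    · exact hc
    · exact (hsub ⟨hlt, lt_of_le_of_lt hx.2 hmε⟩).2
  have hmono : StrictMonoOn u (Set.Icc c m) := by
    apply strictMonoOn_of_deriv_pos (convex_Icc c m)
    · intro x hx
      exact (hu x (hIccsub hx)).continuousAt.continuousWithinAt
    · intro x hx
      rw [interior_Icc] at hx
      rw [(hu x (hIccsub ⟨hx.1.le, hx.2.le⟩)).deriv]
      exact (hsub ⟨hx.1, lt_trans hx.2 hmε⟩).1
  -- contradiction with local max
  have hev : ∀ᶠ t in nhdsWithin c (Set.Ioi c), u t ≤ u c :=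
    eventually_nhdsWithin_of_eventually_nhds hmax
  have hev2 : ∀ᶠ t in nhdsWithin c (Set.Ioi c), t ∈ Set.Ioo c m :=
    Ioo_mem_nhdsGT hcm
  obtain ⟨t, ht1, ht2⟩ := (hev.and hev2).exists
  exact absurd (hmono ⟨le_refl c, hcm.le⟩ ⟨ht2.1.le, ht2.2.le⟩ ht2.1) (not_lt.2 ht1)


/-- Uniqueness of zero solutions for the GCI elliptic equation: any solution of the
    homogeneous equation
    −sin θ ψ' + d[(1/sin θ)(sin θ ψ')' − ψ/sin²θ] + iα sin θ ψ = 0 on (0,π)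
    belonging to the weighted H¹ space vanishes; consequently the equation with
    right-hand side sin θ has at most one such solution. -/
theorem gci_uniqueness (d α : ℝ) (hd : 0 < d) (ψ : ℝ → ℂ)
    (hψ : ContDiffOn ℝ 2 ψ (Set.Ioo 0 Real.pi))
    (hV : IntegrableOn
      (fun θ => (‖deriv ψ θ‖ ^ 2 + ‖ψ θ‖ ^ 2 / Real.sin θ ^ 2)
        * Real.exp (Real.cos θ / d) * Real.sin θ) (Set.Ioo 0 Real.pi))
    (heq : ∀ θ ∈ Set.Ioo 0 Real.pi,
      -(Real.sin θ : ℂ) * deriv ψ θ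
          + (d : ℂ) * ((1 / (Real.sin θ : ℂ))
              * deriv (fun t => (Real.sin t : ℂ) * deriv ψ t) θ
            - ψ θ / (Real.sin θ : ℂ) ^ 2)
          + Complex.I * (α : ℂ) * (Real.sin θ : ℂ) * ψ θ = 0) :
    ∀ θ ∈ Set.Ioo 0 Real.pi, ψ θ = 0 := by
  intro θ₀ hθ₀
  by_contra hne
  -- basic notation
  set u : ℝ → ℝ := fun t => (ψ t).re ^ 2 + (ψ t).im ^ 2 with hu_def
  have hnorm : ∀ t, ‖ψ t‖ ^ 2 = u t := by
    intro t
    rw [hu_def]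
    rw [Complex.sq_norm, Complex.normSq_apply]
    ring
  set m : ℝ := u θ₀ with hm_def
  have hm : 0 < m := by
    rw [hm_def, ← hnorm θ₀]
    exact pow_pos (norm_pos_iff.2 hne) 2
  -- derivative infrastructure
  have hψd : ∀ θ ∈ Set.Ioo 0 Real.pi, HasDerivAt ψ (deriv ψ θ) θ := by
    intro θ hθ
    exact ((hψ.differentiableOn (by norm_num)).differentiableAt
      (isOpen_Ioo.mem_nhds hθ)).hasDerivAt
  have hdc : ContDiffOn ℝ 1 (deriv ψ) (Set.Ioo 0 Real.pi) :=
    hψ.deriv_of_isOpen isOpen_Ioo (by norm_num)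
  have hψd2 : ∀ θ ∈ Set.Ioo 0 Real.pi, HasDerivAt (deriv ψ) (deriv (deriv ψ) θ) θ := by
    intro θ hθ
    exact ((hdc.differentiableOn (by norm_num)).differentiableAt
      (isOpen_Ioo.mem_nhds hθ)).hasDerivAt
  -- real/imaginary part derivatives
  have hre : ∀ θ ∈ Set.Ioo 0 Real.pi,
      HasDerivAt (fun t => (ψ t).re) (deriv ψ θ).re θ := by
    intro θ hθ
    exact (Complex.reCLM.hasFDerivAt.comp_hasDerivAt θ (hψd θ hθ))
  have him : ∀ θ ∈ Set.Ioo 0 Real.pi,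
      HasDerivAt (fun t => (ψ t).im) (deriv ψ θ).im θ := by
    intro θ hθ
    exact (Complex.imCLM.hasFDerivAt.comp_hasDerivAt θ (hψd θ hθ))
  have hre2 : ∀ θ ∈ Set.Ioo 0 Real.pi,
      HasDerivAt (fun t => (deriv ψ t).re) (deriv (deriv ψ) θ).re θ := by
    intro θ hθ
    exact (Complex.reCLM.hasFDerivAt.comp_hasDerivAt θ (hψd2 θ hθ))
  have him2 : ∀ θ ∈ Set.Ioo 0 Real.pi,
      HasDerivAt (fun t => (deriv ψ t).im) (deriv (deriv ψ) θ).im θ := by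
    intro θ hθ
    exact (Complex.imCLM.hasFDerivAt.comp_hasDerivAt θ (hψd2 θ hθ))
  set v : ℝ → ℝ := fun t =>
    2 * ((ψ t).re * (deriv ψ t).re + (ψ t).im * (deriv ψ t).im) with hv_def
  have huv : ∀ θ ∈ Set.Ioo 0 Real.pi, HasDerivAt u (v θ) θ := by
    intro θ hθ
    have h1 := ((hre θ hθ).pow 2).add ((him θ hθ).pow 2)
    refine h1.congr_deriv ?_
    rw [hv_def]
    ring
  have hvd : ∀ θ ∈ Set.Ioo 0 Real.pi, HasDerivAt v
      (2 * ((deriv ψ θ).re ^ 2 + (deriv ψ θ).im ^ 2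
        + (ψ θ).re * (deriv (deriv ψ) θ).re + (ψ θ).im * (deriv (deriv ψ) θ).im)) θ := by
    intro θ hθ
    have h1 := (((hre θ hθ).mul (hre2 θ hθ)).add ((him θ hθ).mul (him2 θ hθ))).const_mul 2
    refine h1.congr_deriv ?_
    ring
  -- claim 1 : some point to the left has u < m
  have claim1 : ∃ a ∈ Set.Ioo 0 θ₀, u a < m := by
    by_contra hcon
    push_neg at hcon
    have hFi : IntegrableOn
        (fun θ => (‖deriv ψ θ‖ ^ 2 + ‖ψ θ‖ ^ 2 / Real.sin θ ^ 2)
          * Real.exp (Real.cos θ / d) * Real.sin θ) (Set.Ioo 0 θ₀) :=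
      hV.mono_set (Set.Ioo_subset_Ioo le_rfl hθ₀.2.le)
    have hgi : IntegrableOn (fun x => m * Real.exp (-(1/d)) * x⁻¹) (Set.Ioo 0 θ₀) := by
      refine hFi.mono' ((measurable_inv.const_mul _).aestronglyMeasurable) ?_
      rw [ae_restrict_iff' measurableSet_Ioo]
      refine ae_of_all _ (fun x hx => ?_)
      have hx0 : 0 < x := hx.1
      have hxπ : x < Real.pi := lt_trans hx.2 hθ₀.2
      have hs : 0 < Real.sin x := Real.sin_pos_of_pos_of_lt_pi hx0 hxπ
      have hsle : Real.sin x ≤ x := Real.sin_le hx0.le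
      have hexp : Real.exp (-(1/d)) ≤ Real.exp (Real.cos x / d) := by
        apply Real.exp_le_exp.2
        rw [show -(1/d) = (-1)/d by ring]
        gcongr
        exact Real.neg_one_le_cos x
      have hux : m ≤ u x := hcon x hx
      rw [Real.norm_eq_abs, abs_of_nonneg (by positivity)]
      have e1 : m * Real.exp (-(1/d)) * x⁻¹ ≤ m * Real.exp (-(1/d)) * (Real.sin x)⁻¹ :=
        mul_le_mul_of_nonneg_left (inv_anti₀ hs hsle) (by positivity)
      have e2 : m * Real.exp (-(1/d)) * (Real.sin x)⁻¹
          ≤ (‖ψ x‖ ^ 2 * Real.exp (Real.cos x / d)) * (Real.sin x)⁻¹ :=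
        mul_le_mul_of_nonneg_right
          (mul_le_mul (le_of_le_of_eq hux (hnorm x).symm) hexp (Real.exp_pos _).le
            (by positivity))
          (inv_nonneg.2 hs.le)
      have e3 : (‖ψ x‖ ^ 2 * Real.exp (Real.cos x / d)) * (Real.sin x)⁻¹
          = (‖ψ x‖ ^ 2 / Real.sin x ^ 2) * Real.exp (Real.cos x / d) * Real.sin x := by
        field_simp
      have e4 : (‖ψ x‖ ^ 2 / Real.sin x ^ 2) * Real.exp (Real.cos x / d) * Real.sin x
          ≤ (‖deriv ψ x‖ ^ 2 + ‖ψ x‖ ^ 2 / Real.sin x ^ 2)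
            * Real.exp (Real.cos x / d) * Real.sin x := by
        have h5 : 0 ≤ ‖deriv ψ x‖ ^ 2 * Real.exp (Real.cos x / d) * Real.sin x := by
          positivity
        rw [add_mul, add_mul]
        linarith
      linarith [e1, e2, e3.le, e3.ge, e4]
    have hii : IntegrableOn (fun x : ℝ => x⁻¹) (Set.Ioo 0 θ₀) := by
      have hc0 : (m * Real.exp (-(1/d))) ≠ 0 := by positivity
      have h6 : IntegrableOn
          (fun x : ℝ => (m * Real.exp (-(1/d)))⁻¹ * (m * Real.exp (-(1/d)) * x⁻¹))
          (Set.Ioo 0 θ₀) := hgi.const_mul _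
      refine h6.congr_fun (fun x _ => ?_) measurableSet_Ioo
      field_simp
    exact not_int_inv hθ₀.1 hii
  -- claim 2 : some point to the right has u < m
  have claim2 : ∃ b ∈ Set.Ioo θ₀ Real.pi, u b < m := by
    by_contra hcon
    push_neg at hcon
    have hFi : IntegrableOn
        (fun θ => (‖deriv ψ θ‖ ^ 2 + ‖ψ θ‖ ^ 2 / Real.sin θ ^ 2)
          * Real.exp (Real.cos θ / d) * Real.sin θ) (Set.Ioo θ₀ Real.pi) :=
      hV.mono_set (Set.Ioo_subset_Ioo hθ₀.1.le le_rfl)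
    have hgi : IntegrableOn (fun x => m * Real.exp (-(1/d)) * (Real.pi - x)⁻¹)
        (Set.Ioo θ₀ Real.pi) := by
      refine hFi.mono'
        ((((measurable_const.sub measurable_id).inv).const_mul _).aestronglyMeasurable) ?_
      rw [ae_restrict_iff' measurableSet_Ioo]
      refine ae_of_all _ (fun x hx => ?_)
      have hx0 : 0 < x := lt_trans hθ₀.1 hx.1
      have hxπ : x < Real.pi := hx.2
      have hs : 0 < Real.sin x := Real.sin_pos_of_pos_of_lt_pi hx0 hxπ
      have hπx : 0 < Real.pi - x := by linarith
      have hsle : Real.sin x ≤ Real.pi - x := by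
        rw [← Real.sin_pi_sub]
        exact Real.sin_le hπx.le
      have hexp : Real.exp (-(1/d)) ≤ Real.exp (Real.cos x / d) := by
        apply Real.exp_le_exp.2
        rw [show -(1/d) = (-1)/d by ring]
        gcongr
        exact Real.neg_one_le_cos x
      have hux : m ≤ u x := hcon x hx
      rw [Real.norm_eq_abs, abs_of_nonneg (by positivity)]
      have e1 : m * Real.exp (-(1/d)) * (Real.pi - x)⁻¹
          ≤ m * Real.exp (-(1/d)) * (Real.sin x)⁻¹ :=
        mul_le_mul_of_nonneg_left (inv_anti₀ hs hsle) (by positivity)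
      have e2 : m * Real.exp (-(1/d)) * (Real.sin x)⁻¹
          ≤ (‖ψ x‖ ^ 2 * Real.exp (Real.cos x / d)) * (Real.sin x)⁻¹ :=
        mul_le_mul_of_nonneg_right
          (mul_le_mul (le_of_le_of_eq hux (hnorm x).symm) hexp (Real.exp_pos _).le
            (by positivity))
          (inv_nonneg.2 hs.le)
      have e3 : (‖ψ x‖ ^ 2 * Real.exp (Real.cos x / d)) * (Real.sin x)⁻¹
          = (‖ψ x‖ ^ 2 / Real.sin x ^ 2) * Real.exp (Real.cos x / d) * Real.sin x := by
        field_simp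
      have e4 : (‖ψ x‖ ^ 2 / Real.sin x ^ 2) * Real.exp (Real.cos x / d) * Real.sin x
          ≤ (‖deriv ψ x‖ ^ 2 + ‖ψ x‖ ^ 2 / Real.sin x ^ 2)
            * Real.exp (Real.cos x / d) * Real.sin x := by
        have h5 : 0 ≤ ‖deriv ψ x‖ ^ 2 * Real.exp (Real.cos x / d) * Real.sin x := by
          positivity
        rw [add_mul, add_mul]
        linarith
      linarith [e1, e2, e3.le, e3.ge, e4]
    have hii : IntegrableOn (fun x : ℝ => (Real.pi - x)⁻¹) (Set.Ioo θ₀ Real.pi) := by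
      have hc0 : (m * Real.exp (-(1/d))) ≠ 0 := by positivity
      have h6 : IntegrableOn
          (fun x : ℝ => (m * Real.exp (-(1/d)))⁻¹ * (m * Real.exp (-(1/d)) * (Real.pi - x)⁻¹))
          (Set.Ioo θ₀ Real.pi) := hgi.const_mul _
      refine h6.congr_fun (fun x _ => ?_) measurableSet_Ioo
      field_simp
    exact not_int_inv' hθ₀.2 hii
  -- assemble: maximum point
  obtain ⟨a, ha, hua⟩ := claim1
  obtain ⟨b, hb, hub⟩ := claim2
  have hab : a < b := lt_trans ha.2 hb.1
  have hIcc : Set.Icc a b ⊆ Set.Ioo 0 Real.pi := fun x hx =>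
    ⟨lt_of_lt_of_le ha.1 hx.1, lt_of_le_of_lt hx.2 hb.2⟩
  have hcont : ContinuousOn u (Set.Icc a b) := by
    intro x hx
    exact ((huv x (hIcc hx)).continuousAt).continuousWithinAt
  obtain ⟨c, hcmem, hcmax⟩ := isCompact_Icc.exists_isMaxOn (Set.nonempty_Icc.2 hab.le) hcont
  have hθ₀mem : θ₀ ∈ Set.Icc a b := ⟨ha.2.le, hb.1.le⟩
  have hum : m ≤ u c := hcmax hθ₀mem
  have hcIoo : c ∈ Set.Ioo a b := by
    rcases hcmem.1.lt_or_eq with h | h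
    · rcases hcmem.2.lt_or_eq with h' | h'
      · exact ⟨h, h'⟩
      · exact absurd (h' ▸ hum) (not_le.2 hub)
    · exact absurd (h ▸ hum) (not_le.2 hua)
  have hcΩ : c ∈ Set.Ioo 0 Real.pi := hIcc ⟨hcIoo.1.le, hcIoo.2.le⟩
  have hlocal : IsLocalMax u c := hcmax.isLocalMax (Icc_mem_nhds hcIoo.1 hcIoo.2)
  have hvc : v c = 0 := hlocal.hasDerivAt_eq_zero (huv c hcΩ)
  -- the second derivative is positive at c : complex computation
  have hKpos : 0 < 2 * ((deriv ψ c).re ^ 2 + (deriv ψ c).im ^ 2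
      + (ψ c).re * (deriv (deriv ψ) c).re + (ψ c).im * (deriv (deriv ψ) c).im) := by
    have hs : 0 < Real.sin c := Real.sin_pos_of_pos_of_lt_pi hcΩ.1 hcΩ.2
    have hs' : (Real.sin c : ℂ) ≠ 0 := Complex.ofReal_ne_zero.2 hs.ne'
    have hD : deriv (fun t => (Real.sin t : ℂ) * deriv ψ t) c
        = (Real.cos c : ℂ) * deriv ψ c + (Real.sin c : ℂ) * deriv (deriv ψ) c :=
      (((Real.hasDerivAt_sin c).ofReal_comp).mul (hψd2 c hcΩ)).deriv
    have h := heq c hcΩ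
    rw [hD] at h
    have hs2 : Complex.sin (c : ℂ) ≠ 0 := by
      rw [← Complex.ofReal_sin]
      exact hs'
    field_simp [hs2] at h
    have hkey : ((-(Real.sin c)^4 + d * (Real.sin c)^2 * Real.cos c : ℝ) : ℂ) * deriv ψ c
        + ((d * (Real.sin c)^3 : ℝ) : ℂ) * deriv (deriv ψ) c
        + ((-(d * Real.sin c) : ℝ) : ℂ) * ψ c
        + Complex.I * ((α * (Real.sin c)^4 : ℝ) : ℂ) * ψ c = 0 := by
      push_cast
      push_cast at h
      linear_combination (Complex.sin (c : ℂ)) * h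
    have h1 := congrArg Complex.re hkey
    have h2 := congrArg Complex.im hkey
    simp only [Complex.add_re, Complex.mul_re, Complex.mul_im, Complex.add_im,
      Complex.ofReal_re, Complex.ofReal_im, Complex.I_re, Complex.I_im, Complex.zero_re,
      Complex.zero_im] at h1 h2
    have hP : (ψ c).re * (deriv ψ c).re + (ψ c).im * (deriv ψ c).im = 0 := by
      have := hvc
      rw [hv_def] at this
      simp only at this
      linarith
    have h3 : d * (Real.sin c)^3
        * ((ψ c).re * (deriv (deriv ψ) c).re + (ψ c).im * (deriv (deriv ψ) c).im)
        = d * Real.sin c * ((ψ c).re^2 + (ψ c).im^2) := by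
      linear_combination (ψ c).re * h1 + (ψ c).im * h2
        + ((Real.sin c)^4 - d * (Real.sin c)^2 * Real.cos c) * hP
    have hum' : m ≤ (ψ c).re^2 + (ψ c).im^2 := hum
    have hQ : 0 < (ψ c).re * (deriv (deriv ψ) c).re + (ψ c).im * (deriv (deriv ψ) c).im := by
      have hds : 0 < d * (Real.sin c)^3 := by positivity
      have hdsu : 0 < d * Real.sin c * ((ψ c).re^2 + (ψ c).im^2) :=
        mul_pos (mul_pos hd hs) (lt_of_lt_of_le hm hum')
      have h4 : 0 < d * (Real.sin c)^3
          * ((ψ c).re * (deriv (deriv ψ) c).re + (ψ c).im * (deriv (deriv ψ) c).im) := by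
        rw [h3]; exact hdsu
      refine lt_of_not_ge fun hge => ?_
      have h5 := mul_nonpos_iff.2 (Or.inr ⟨hge, hds.le⟩)
      rw [mul_comm] at h5
      linarith
    have h6 := sq_nonneg (deriv ψ c).re
    have h7 := sq_nonneg (deriv ψ c).im
    linarith
  exact no_local_max hcIoo (fun t ht => huv t (hIcc ⟨ht.1.le, ht.2.le⟩)) hvc
    (hvd c hcΩ) hKpos hlocal
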